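/- Assume Γ* is nonempty. Then for every η > 0: X_src ⊆ (∂O_η) ∩ (∂K_src), X_dst ⊆ (∂O_η) ∩ (∂K_dst), and Γ* ⊆ cl(O_η). -/

import Mathlib

open Set Metric MeasureTheory
open scoped ENNReal

noncomputable section

/-- Points of the `d`-dimensional Euclidean space. -/
abbrev Pt (d : ℕ) := EuclideanSpace ℝ (Fin d)

/-- A control: a measurable map valued in the unit sphere. -/
def IsControl {d : ℕ} (α : ℝ → Pt d) : Prop :=
  Measurable α ∧ ∀ t, ‖α t‖ = 1

/-- Admissible trajectory (in integral form, i.e. an absolutely continuous solution of the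
controlled ODE) with control `α`, constrained to stay in `K`, with direction sign `σ`
(`σ = 1`: forward dynamics `y' = f(y,α)·α`; `σ = -1`: reverse dynamics `y' = -f(y,α)·α`),
starting at `x`, with horizon `τ`. -/
def IsTrajCtrl {d : ℕ} (K : Set (Pt d)) (f : Pt d → Pt d → ℝ) (σ : ℝ)
    (x : Pt d) (τ : ℝ) (y α : ℝ → Pt d) : Prop :=
  0 ≤ τ ∧ y 0 = x ∧ (∀ t ∈ Icc 0 τ, y t ∈ K) ∧ IsControl α ∧
    ∀ t ∈ Icc 0 τ, y t = x + ∫ s in (0:ℝ)..t, (σ * f (y s) (α s)) • α s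

/-- Admissible trajectory, for some control. -/
def IsTraj {d : ℕ} (K : Set (Pt d)) (f : Pt d → Pt d → ℝ) (σ : ℝ)
    (x : Pt d) (τ : ℝ) (y : ℝ → Pt d) : Prop :=
  ∃ α, IsTrajCtrl K f σ x τ y α

/-- Set of horizons of admissible trajectories from `x` ending in `target`. -/
def reachTimes {d : ℕ} (K : Set (Pt d)) (f : Pt d → Pt d → ℝ) (σ : ℝ)
    (target : Set (Pt d)) (x : Pt d) : Set ℝ :=
  {τ | ∃ y : ℝ → Pt d, IsTraj K f σ x τ y ∧ y τ ∈ target}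

/-- Minimum time, `∞` if the target is unreachable (`inf ∅ = ∞`). -/
def minTime {d : ℕ} (K : Set (Pt d)) (f : Pt d → Pt d → ℝ) (σ : ℝ)
    (target : Set (Pt d)) (x : Pt d) : ℝ≥0∞ :=
  ⨅ τ ∈ reachTimes K f σ target x, ENNReal.ofReal τ

/-- Kruzkov transform `1 - e^{-T}`, with the convention `e^{-∞} = 0`. -/
def kruzkov (T : ℝ≥0∞) : ℝ := if T = ∞ then 1 else 1 - Real.exp (-T.toReal)

/-- Value function (Kruzkov transform of the minimum time). -/
def val {d : ℕ} (K : Set (Pt d)) (f : Pt d → Pt d → ℝ) (σ : ℝ)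
    (target : Set (Pt d)) (x : Pt d) : ℝ :=
  kruzkov (minTime K f σ target x)

/-- Geodesic points from `x`: points `y(t)` of optimal trajectories from `x` to `target`. -/
def geodPts {d : ℕ} (K : Set (Pt d)) (f : Pt d → Pt d → ℝ) (σ : ℝ)
    (target : Set (Pt d)) (x : Pt d) : Set (Pt d) :=
  {p | ∃ τ y, IsTraj K f σ x τ y ∧ y τ ∈ target ∧
    ENNReal.ofReal τ = minTime K f σ target x ∧ ∃ t ∈ Icc 0 τ, p = y t}

/-- δ-geodesic points from `x`: points `y(t)` of δ-optimal trajectories from `x` to `target`. -/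
def deltaGeodPts {d : ℕ} (K : Set (Pt d)) (f : Pt d → Pt d → ℝ) (σ : ℝ)
    (target : Set (Pt d)) (x : Pt d) (δ : ℝ) : Set (Pt d) :=
  {p | ∃ τ y, IsTraj K f σ x τ y ∧ y τ ∈ target ∧
    1 - Real.exp (-τ) ≤ val K f σ target x + δ ∧ ∃ t ∈ Icc 0 τ, p = y t}

/-- The setting of the minimum time problem: a nonempty bounded open domain `Ω ⊆ ℝ^d` with
`d ≥ 1`, a positive continuous bounded Lipschitz speed function `f` on `cl(Ω) × S₁`, and two
disjoint nonempty compact subsets `K_src, K_dst` of `Ω`. -/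
structure Setting (d : ℕ) where
  Ω : Set (Pt d)
  f : Pt d → Pt d → ℝ
  Mf : ℝ
  Lf : ℝ
  Lfa : ℝ
  Ksrc : Set (Pt d)
  Kdst : Set (Pt d)
  hd : 1 ≤ d
  hΩopen : IsOpen Ω
  hΩbdd : Bornology.IsBounded Ω
  hΩne : Ω.Nonempty
  hfcont : ContinuousOn (fun p : Pt d × Pt d => f p.1 p.2) (closure Ω ×ˢ sphere (0 : Pt d) 1)
  hfpos : ∀ x ∈ closure Ω, ∀ a ∈ sphere (0 : Pt d) 1, 0 < f x a
  hfbdd : ∀ x ∈ closure Ω, ∀ a ∈ sphere (0 : Pt d) 1, f x a ≤ Mf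
  hfLipx : ∀ a ∈ sphere (0 : Pt d) 1, ∀ x ∈ closure Ω, ∀ x' ∈ closure Ω,
    |f x a - f x' a| ≤ Lf * ‖x - x'‖
  hfLipa : ∀ x ∈ closure Ω, ∀ a ∈ sphere (0 : Pt d) 1, ∀ a' ∈ sphere (0 : Pt d) 1,
    |f x a - f x a'| ≤ Lfa * ‖a - a'‖
  hKsrcComp : IsCompact Ksrc
  hKdstComp : IsCompact Kdst
  hKsrcNe : Ksrc.Nonempty
  hKdstNe : Kdst.Nonempty
  hKsrcSub : Ksrc ⊆ Ω
  hKdstSub : Kdst ⊆ Ω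
  hKdisj : Disjoint Ksrc Kdst

namespace Setting

variable {d : ℕ} (S : Setting d)

/-- Minimum time to destination `T_→d`. -/
def Td (x : Pt d) : ℝ≥0∞ := minTime (closure S.Ω) S.f 1 S.Kdst x

/-- Minimum time from source `T_s←` (reverse dynamics). -/
def Ts (x : Pt d) : ℝ≥0∞ := minTime (closure S.Ω) S.f (-1) S.Ksrc x

/-- Value function to destination `v_→d = 1 - e^{-T_→d}`. -/
def vd (x : Pt d) : ℝ := val (closure S.Ω) S.f 1 S.Kdst x

/-- Value function from source `v_s← = 1 - e^{-T_s←}`. -/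
def vs (x : Pt d) : ℝ := val (closure S.Ω) S.f (-1) S.Ksrc x

/-- State-constrained value function to destination: trajectories confined to `K`. -/
def vdC (K : Set (Pt d)) (x : Pt d) : ℝ := val K S.f 1 S.Kdst x

/-- State-constrained value function from source: trajectories confined to `K`. -/
def vsC (K : Set (Pt d)) (x : Pt d) : ℝ := val K S.f (-1) S.Ksrc x

/-- `F_v(x) = v_s←(x) + v_→d(x) − v_s←(x)·v_→d(x)`. -/
def Fv (x : Pt d) : ℝ := S.vs x + S.vd x - S.vs x * S.vd x

/-- The neighborhood `O_η` of the optimal trajectories. -/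
def Oset (η : ℝ) : Set (Pt d) :=
  {x ∈ S.Ω \ (S.Ksrc ∪ S.Kdst) | S.Fv x < sInf (S.Fv '' S.Ω) + η}

/-- `X_src = Argmin_{x ∈ K_src} v_→d(x)`. -/
def Xsrc : Set (Pt d) := {x ∈ S.Ksrc | ∀ z ∈ S.Ksrc, S.vd x ≤ S.vd z}

/-- `X_dst = Argmin_{x ∈ K_dst} v_s←(x)`. -/
def Xdst : Set (Pt d) := {x ∈ S.Kdst | ∀ z ∈ S.Kdst, S.vs x ≤ S.vs z}

/-- The set of forward geodesic points `∪_{x ∈ X_src} Γ*_x`. -/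
def GammaFwd : Set (Pt d) := ⋃ x ∈ S.Xsrc, geodPts (closure S.Ω) S.f 1 S.Kdst x

/-- The set of reverse geodesic points `∪_{x ∈ X_dst} Γ̃*_x`. -/
def GammaRev : Set (Pt d) := ⋃ x ∈ S.Xdst, geodPts (closure S.Ω) S.f (-1) S.Ksrc x

/-- `v* = inf_{x ∈ K_src} v_→d(x)`. -/
def vStar : ℝ := sInf (S.vd '' S.Ksrc)

/-- `X_src^δ = {x ∈ ∂K_src : v_→d(x) ≤ v* + δ}`. -/
def XsrcD (δ : ℝ) : Set (Pt d) := {x ∈ frontier S.Ksrc | S.vd x ≤ S.vStar + δ}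

/-- `X_dst^δ = {x ∈ ∂K_dst : v_s←(x) ≤ v* + δ}`. -/
def XdstD (δ : ℝ) : Set (Pt d) := {x ∈ frontier S.Kdst | S.vs x ≤ S.vStar + δ}

/-- The set of forward δ-geodesic points `Γ^δ`. -/
def GammaD (δ : ℝ) : Set (Pt d) :=
  ⋃ δ' ∈ Icc (0:ℝ) δ, ⋃ x ∈ S.XsrcD (δ - δ'), deltaGeodPts (closure S.Ω) S.f 1 S.Kdst x δ'

/-- The set of reverse δ-geodesic points. -/
def GammaDRev (δ : ℝ) : Set (Pt d) :=
  ⋃ δ' ∈ Icc (0:ℝ) δ, ⋃ x ∈ S.XdstD (δ - δ'), deltaGeodPts (closure S.Ω) S.f (-1) S.Ksrc x δ'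

end Setting

/-! ### Auxiliary lemmas -/

section Aux

namespace MinTimeAux

open intervalIntegral

/-! #### Kruzkov transform lemmas -/

lemma kruzkov_top : kruzkov ⊤ = 1 := if_pos rfl

lemma kruzkov_nonneg (T : ℝ≥0∞) : 0 ≤ kruzkov T := by
  unfold kruzkov; split
  · norm_num
  · have : Real.exp (-T.toReal) ≤ 1 := by
      rw [Real.exp_le_one_iff]; simp [ENNReal.toReal_nonneg]
    linarith

lemma kruzkov_le_one (T : ℝ≥0∞) : kruzkov T ≤ 1 := by
  unfold kruzkov; split
  · exact le_refl 1
  · have : 0 < Real.exp (-T.toReal) := Real.exp_pos _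
    linarith

lemma kruzkov_lt_one {T : ℝ≥0∞} (h : T ≠ ⊤) : kruzkov T < 1 := by
  unfold kruzkov; rw [if_neg h]
  have : 0 < Real.exp (-T.toReal) := Real.exp_pos _
  linarith

lemma kruzkov_ofReal {t : ℝ} (ht : 0 ≤ t) :
    kruzkov (ENNReal.ofReal t) = 1 - Real.exp (-t) := by
  unfold kruzkov
  rw [if_neg ENNReal.ofReal_ne_top, ENNReal.toReal_ofReal ht]

lemma kruzkov_mono {T T' : ℝ≥0∞} (h : T ≤ T') : kruzkov T ≤ kruzkov T' := by
  by_cases hT' : T' = ⊤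
  · rw [hT', kruzkov_top]; exact kruzkov_le_one T
  · have hT : T ≠ ⊤ := fun hh => hT' (by rw [hh] at h; exact top_le_iff.1 h)
    unfold kruzkov
    rw [if_neg hT, if_neg hT']
    have := ENNReal.toReal_mono hT' h
    have := Real.exp_le_exp.2 (neg_le_neg this)
    linarith

lemma kruzkov_add_ofReal_le (T : ℝ≥0∞) {δ : ℝ} (hδ : 0 ≤ δ) :
    kruzkov (T + ENNReal.ofReal δ) ≤ kruzkov T + δ := by
  by_cases hT : T = ⊤
  · rw [hT, top_add, kruzkov_top]; linarith [kruzkov_top]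
  · unfold kruzkov
    rw [if_neg hT, if_neg (by simp [hT, ENNReal.add_ne_top])]
    rw [ENNReal.toReal_add hT ENNReal.ofReal_ne_top, ENNReal.toReal_ofReal hδ]
    have h1 : Real.exp (-T.toReal) ≤ 1 := by
      rw [Real.exp_le_one_iff]; simp [ENNReal.toReal_nonneg]
    have h2 : 1 - δ ≤ Real.exp (-δ) := by
      have := Real.add_one_le_exp (-δ); linarith
    have h3 : Real.exp (-(T.toReal + δ)) = Real.exp (-T.toReal) * Real.exp (-δ) := by
      rw [← Real.exp_add]; ring_nf
    have h4 : 0 < Real.exp (-T.toReal) := Real.exp_pos _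
    nlinarith

/-! #### Basic setting facts -/

variable {d : ℕ}

lemma sphere_ne (S : Setting d) : (sphere (0 : Pt d) 1).Nonempty := by
  refine ⟨EuclideanSpace.single (⟨0, S.hd⟩ : Fin d) (1 : ℝ), ?_⟩
  rw [mem_sphere_zero_iff_norm, EuclideanSpace.norm_single]
  norm_num

lemma Mf_pos (S : Setting d) : 0 < S.Mf := by
  obtain ⟨x₀, hx₀⟩ := S.hΩne
  obtain ⟨a₀, ha₀⟩ := sphere_ne S
  have h1 := S.hfpos x₀ (subset_closure hx₀) a₀ ha₀
  have h2 := S.hfbdd x₀ (subset_closure hx₀) a₀ ha₀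
  linarith

lemma g_norm_le (S : Setting d) {σ : ℝ} (hσ : σ = 1 ∨ σ = -1) {x' a : Pt d}
    (hx : x' ∈ closure S.Ω) (ha : ‖a‖ = 1) :
    ‖(σ * S.f x' a) • a‖ ≤ S.Mf := by
  have haS : a ∈ sphere (0 : Pt d) 1 := mem_sphere_zero_iff_norm.2 ha
  have hpos := S.hfpos x' hx a haS
  have hbdd := S.hfbdd x' hx a haS
  rw [norm_smul, ha, mul_one, Real.norm_eq_abs, abs_mul]
  have hσ1 : |σ| = 1 := by rcases hσ with h | h <;> simp [h]
  rw [hσ1, one_mul, abs_of_pos hpos]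
  exact hbdd

lemma meas_g (S : Setting d) {σ : ℝ} {α : ℝ → Pt d}
    (hα : Measurable α) (hαs : ∀ t, ‖α t‖ = 1) {x' : Pt d} (hx : x' ∈ closure S.Ω) :
    Measurable fun s => (σ * S.f x' (α s)) • α s := by
  have hcont : ContinuousOn (fun a => S.f x' a) (sphere (0 : Pt d) 1) := by
    have hc2 : Continuous fun a : Pt d => ((x', a) : Pt d × Pt d) :=
      (continuous_const.prodMk continuous_id)
    have := S.hfcont.comp hc2.continuousOn
      (fun a (ha : a ∈ sphere (0 : Pt d) 1) => ⟨hx, ha⟩)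
    exact this
  have h1 : Measurable fun s =>
      (⟨α s, mem_sphere_zero_iff_norm.2 (hαs s)⟩ : sphere (0 : Pt d) 1) :=
    hα.subtype_mk
  have hmf : Measurable fun s => S.f x' (α s) :=
    (hcont.restrict.measurable).comp h1
  exact (measurable_const.mul hmf).smul hα

/-! #### Trajectory lemmas -/

lemma traj_integrableOn (S : Setting d) {σ x τ} {y α : ℝ → Pt d}
    (hσ : σ = 1 ∨ σ = -1)
    (h : IsTrajCtrl (closure S.Ω) S.f σ x τ y α) :
    IntegrableOn (fun s => (σ * S.f (y s) (α s)) • α s) (Ioc 0 τ) volume := by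
  obtain ⟨hτ, hy0, hmem, ⟨hαm, hαs⟩, heq⟩ := h
  set g : ℝ → Pt d := fun s => (σ * S.f (y s) (α s)) • α s with hg
  have hgb : ∀ s ∈ Icc (0:ℝ) τ, ‖g s‖ ≤ S.Mf := fun s hs =>
    g_norm_le S hσ (hmem s hs) (hαs s)
  by_contra h0
  set B : Set ℝ := {t | t ∈ Icc 0 τ ∧ ¬ IntegrableOn g (Ioc 0 t) volume} with hB
  have hτB : τ ∈ B := ⟨⟨hτ, le_refl τ⟩, h0⟩
  have hBne : B.Nonempty := ⟨τ, hτB⟩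
  have hBbdd : BddBelow B := ⟨0, fun t ht => ht.1.1⟩
  set a := sInf B with ha
  have ha0 : 0 ≤ a := le_csInf hBne fun t ht => ht.1.1
  have haτ : a ≤ τ := csInf_le hBbdd hτB
  have hup : ∀ t ∈ B, ∀ t', t ≤ t' → t' ≤ τ → t' ∈ B := by
    rintro t ⟨⟨ht0, _⟩, hti⟩ t' htt' ht'
    exact ⟨⟨ht0.trans htt', ht'⟩,
      fun hint => hti (hint.mono_set (Ioc_subset_Ioc_right htt'))⟩
  have hBgt : ∀ t, a < t → t ≤ τ → t ∈ B := by
    intro t hat htτ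
    obtain ⟨b, hbB, hbt⟩ := exists_lt_of_csInf_lt hBne hat
    exact hup b hbB t hbt.le htτ
  have hyx : ∀ t ∈ B, y t = x := by
    intro t htB
    have hint : ¬ IntervalIntegrable g volume 0 t := by
      rw [intervalIntegrable_iff, uIoc_of_le htB.1.1]; exact htB.2
    have h1 := heq t htB.1
    rw [show (∫ s in (0:ℝ)..t, (σ * S.f (y s) (α s)) • α s) = 0 from
      intervalIntegral.integral_undef hint] at h1
    simpa using h1
  have hlt : ∀ t, 0 ≤ t → t < a → IntegrableOn g (Ioc 0 t) volume := by
    intro t ht0 hta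
    by_contra hni
    exact absurd (csInf_le hBbdd ⟨⟨ht0, hta.le.trans haτ⟩, hni⟩) (not_le.2 hta)
  have hU : ∀ s t : Set ℝ, AEStronglyMeasurable g (volume.restrict s) →
      AEStronglyMeasurable g (volume.restrict t) →
      AEStronglyMeasurable g (volume.restrict (s ∪ t)) := fun s t hs ht =>
    (hs.add_measure ht).mono_measure (Measure.restrict_union_le _ _)
  have hnull : ∀ c : ℝ, AEStronglyMeasurable g (volume.restrict {c}) := by
    intro c
    have hres : volume.restrict ({c} : Set ℝ) = 0 := by
      rw [Measure.restrict_eq_zero]; exact measure_singleton c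
    rw [hres]; exact aestronglyMeasurable_zero_measure g
  have hIoo1 : AEStronglyMeasurable g (volume.restrict (Ioo 0 a)) := by
    rcases eq_or_lt_of_le ha0 with h0a | h0a
    · rw [← h0a]
      have hres : volume.restrict (Ioo (0:ℝ) 0) = 0 := by simp
      rw [hres]; exact aestronglyMeasurable_zero_measure g
    · have hcover : Ioo (0:ℝ) a = ⋃ n : ℕ, Ioc 0 (a - a / (n + 1)) := by
        ext s
        simp only [mem_Ioo, mem_iUnion, mem_Ioc]
        constructor
        · rintro ⟨hs0, hsa⟩
          obtain ⟨n, hn⟩ := exists_nat_one_div_lt (show 0 < (a - s)/a from div_pos (by linarith) h0a)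
          refine ⟨n, hs0, ?_⟩
          have h1 : a * (1 / ((n:ℝ) + 1)) < a * ((a - s)/a) :=
            mul_lt_mul_of_pos_left hn h0a
          have h2 : a * ((a - s)/a) = a - s := by field_simp
          have h3 : a * (1/((n:ℝ)+1)) = a / ((n:ℝ)+1) := by ring
          linarith
        · rintro ⟨n, hs0, hsle⟩
          refine ⟨hs0, lt_of_le_of_lt hsle ?_⟩
          have : 0 < a / ((n:ℝ)+1) := by positivity
          linarith
      rw [hcover, aestronglyMeasurable_iUnion_iff]
      intro n
      by_cases hn0 : 0 ≤ a - a/((n:ℝ)+1)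
      · have hle : a - a/((n:ℝ)+1) < a := by
          have : 0 < a/((n:ℝ)+1) := by positivity
          linarith
        exact (hlt _ hn0 hle).aestronglyMeasurable
      · have hemp : Ioc (0:ℝ) (a - a/((n:ℝ)+1)) = ∅ := Ioc_eq_empty (by
          intro hcon; exact hn0 (le_of_lt hcon))
        rw [hemp]
        have hres : volume.restrict (∅ : Set ℝ) = 0 := by simp
        rw [hres]; exact aestronglyMeasurable_zero_measure g
  have hxcl : x ∈ closure S.Ω := hy0 ▸ hmem 0 ⟨le_refl 0, hτ⟩
  have hIoo2 : AEStronglyMeasurable g (volume.restrict (Ioo a τ)) := by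
    refine ((meas_g S (σ := σ) hαm hαs hxcl).aestronglyMeasurable).congr ?_
    refine (ae_restrict_iff' measurableSet_Ioo).2 (ae_of_all _ fun s hs => ?_)
    have hsB : s ∈ B := hBgt s hs.1 hs.2.le
    rw [hg]
    simp only
    rw [hyx s hsB]
  have hsub : Ioc (0:ℝ) τ ⊆ (Ioo 0 a ∪ {a}) ∪ (Ioo a τ ∪ {τ}) := by
    intro s hs
    rcases lt_trichotomy s a with hcmp | hcmp | hcmp
    · exact Or.inl (Or.inl ⟨hs.1, hcmp⟩)
    · exact Or.inl (Or.inr (by simp [hcmp]))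
    · rcases eq_or_lt_of_le hs.2 with h2 | h2
      · exact Or.inr (Or.inr (by simp [h2]))
      · exact Or.inr (Or.inl ⟨hcmp, h2⟩)
  have hA : AEStronglyMeasurable g (volume.restrict (Ioc 0 τ)) :=
    (hU _ _ (hU _ _ hIoo1 (hnull a)) (hU _ _ hIoo2 (hnull τ))).mono_measure
      (Measure.restrict_mono hsub le_rfl)
  refine h0 ?_
  refine Integrable.mono' (g := fun _ => S.Mf) ?_ hA ?_
  · exact integrableOn_const (by rw [Real.volume_Ioc]; exact ENNReal.ofReal_ne_top)
  · exact (ae_restrict_iff' measurableSet_Ioc).2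
      (ae_of_all _ fun s hs => hgb s ⟨hs.1.le, hs.2⟩)

lemma traj_ii (S : Setting d) {σ x τ} {y α : ℝ → Pt d}
    (hσ : σ = 1 ∨ σ = -1) (h : IsTrajCtrl (closure S.Ω) S.f σ x τ y α)
    {t₁ t₂ : ℝ} (h₁ : t₁ ∈ Icc 0 τ) (h₂ : t₂ ∈ Icc 0 τ) :
    IntervalIntegrable (fun s => (σ * S.f (y s) (α s)) • α s) volume t₁ t₂ := by
  rw [intervalIntegrable_iff]
  refine (traj_integrableOn S hσ h).mono_set ?_
  intro s hs
  rw [Set.mem_uIoc] at hs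
  rcases hs with ⟨ha1, ha2⟩ | ⟨ha1, ha2⟩
  · exact ⟨lt_of_le_of_lt h₁.1 ha1, ha2.trans h₂.2⟩
  · exact ⟨lt_of_le_of_lt h₂.1 ha1, ha2.trans h₁.2⟩

lemma traj_dist_start (S : Setting d) {σ x τ} {y α : ℝ → Pt d}
    (hσ : σ = 1 ∨ σ = -1) (h : IsTrajCtrl (closure S.Ω) S.f σ x τ y α)
    {t : ℝ} (ht : t ∈ Icc 0 τ) : ‖y t - x‖ ≤ S.Mf * t := by
  have heq := h.2.2.2.2 t ht
  have hb : ∀ s ∈ Set.uIoc (0:ℝ) t, ‖(σ * S.f (y s) (α s)) • α s‖ ≤ S.Mf := by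
    intro s hs
    rw [uIoc_of_le ht.1] at hs
    exact g_norm_le S hσ (h.2.2.1 s ⟨hs.1.le, hs.2.trans ht.2⟩) (h.2.2.2.1.2 s)
  have hnorm := intervalIntegral.norm_integral_le_of_norm_le_const hb
  rw [sub_zero, abs_of_nonneg ht.1] at hnorm
  calc ‖y t - x‖ = ‖∫ s in (0:ℝ)..t, (σ * S.f (y s) (α s)) • α s‖ := by
        rw [heq]; simp
  _ ≤ S.Mf * t := hnorm

lemma traj_reverse (S : Setting d) {σ x τ} {y α : ℝ → Pt d}
    (hσ : σ = 1 ∨ σ = -1) (h : IsTrajCtrl (closure S.Ω) S.f σ x τ y α) :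
    IsTrajCtrl (closure S.Ω) S.f (-σ) (y τ) τ
      (fun s => y (τ - s)) (fun s => α (τ - s)) := by
  have hii : ∀ t₁ ∈ Icc (0:ℝ) τ, ∀ t₂ ∈ Icc (0:ℝ) τ,
      IntervalIntegrable (fun s => (σ * S.f (y s) (α s)) • α s) volume t₁ t₂ :=
    fun t₁ ht₁ t₂ ht₂ => traj_ii S hσ h ht₁ ht₂
  obtain ⟨hτ, hy0, hmem, ⟨hαm, hαs⟩, heq⟩ := h
  refine ⟨hτ, by simp, fun t ht => hmem _ ⟨by linarith [ht.2], by linarith [ht.1]⟩,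
    ⟨hαm.comp (measurable_const.sub measurable_id), fun t => hαs _⟩, ?_⟩
  intro t ht
  have hτt : τ - t ∈ Icc (0:ℝ) τ := ⟨by linarith [ht.2], by linarith [ht.1]⟩
  show y (τ - t) = y τ + ∫ s in (0:ℝ)..t, ((-σ) * S.f (y (τ - s)) (α (τ - s))) • α (τ - s)
  have key : (∫ s in (0:ℝ)..t, ((-σ) * S.f (y (τ - s)) (α (τ - s))) • α (τ - s))
      = - ∫ s in (τ - t)..τ, (σ * S.f (y s) (α s)) • α s := by
    have c1 : (∫ s in (0:ℝ)..t, ((-σ) * S.f (y (τ - s)) (α (τ - s))) • α (τ - s))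
        = ∫ s in (0:ℝ)..t,
            -((fun u => (σ * S.f (y u) (α u)) • α u) (τ - s)) := by
      apply intervalIntegral.integral_congr
      intro s _
      simp [neg_mul, neg_smul]
    rw [c1, intervalIntegral.integral_neg,
      intervalIntegral.integral_comp_sub_left
        (fun u => (σ * S.f (y u) (α u)) • α u) τ, sub_zero]
  rw [key]
  have hadd := intervalIntegral.integral_add_adjacent_intervals
    (hii 0 ⟨le_refl 0, hτ⟩ (τ - t) hτt) (hii (τ - t) hτt τ ⟨hτ, le_refl τ⟩)
  rw [heq (τ - t) hτt, heq τ ⟨hτ, le_refl τ⟩, ← hadd]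
  abel

lemma traj_tail (S : Setting d) {σ x τ} {y α : ℝ → Pt d}
    (hσ : σ = 1 ∨ σ = -1) (h : IsTrajCtrl (closure S.Ω) S.f σ x τ y α)
    {t : ℝ} (ht : t ∈ Icc 0 τ) :
    IsTrajCtrl (closure S.Ω) S.f σ (y t) (τ - t)
      (fun s => y (t + s)) (fun s => α (t + s)) := by
  have hii : ∀ t₁ ∈ Icc (0:ℝ) τ, ∀ t₂ ∈ Icc (0:ℝ) τ,
      IntervalIntegrable (fun s => (σ * S.f (y s) (α s)) • α s) volume t₁ t₂ :=
    fun t₁ ht₁ t₂ ht₂ => traj_ii S hσ h ht₁ ht₂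
  obtain ⟨hτ, hy0, hmem, ⟨hαm, hαs⟩, heq⟩ := h
  refine ⟨by linarith [ht.2, ht.1], by simp,
    fun s hs => hmem _ ⟨by linarith [ht.1, hs.1], by linarith [hs.2]⟩,
    ⟨hαm.comp (measurable_const.add measurable_id), fun s => hαs _⟩, ?_⟩
  intro s hs
  have hts : t + s ∈ Icc (0:ℝ) τ := ⟨by linarith [ht.1, hs.1], by linarith [hs.2]⟩
  show y (t + s) = y t + ∫ u in (0:ℝ)..s, (σ * S.f (y (t + u)) (α (t + u))) • α (t + u)
  have key : (∫ u in (0:ℝ)..s, (σ * S.f (y (t + u)) (α (t + u))) • α (t + u))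
      = ∫ u in t..(t + s), (σ * S.f (y u) (α u)) • α u := by
    rw [intervalIntegral.integral_comp_add_left
      (fun u => (σ * S.f (y u) (α u)) • α u) t, add_zero]
  rw [key]
  have hadd := intervalIntegral.integral_add_adjacent_intervals
    (hii 0 ⟨le_refl 0, hτ⟩ t ht) (hii t ht (t + s) hts)
  rw [heq (t + s) hts, heq t ht, ← hadd]
  abel

lemma traj_concat (S : Setting d) {σ x τ₁ τ₂} {y₁ α₁ y₂ α₂ : ℝ → Pt d}
    (hσ : σ = 1 ∨ σ = -1)
    (h₁ : IsTrajCtrl (closure S.Ω) S.f σ x τ₁ y₁ α₁)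
    (h₂ : IsTrajCtrl (closure S.Ω) S.f σ (y₁ τ₁) τ₂ y₂ α₂) :
    IsTrajCtrl (closure S.Ω) S.f σ x (τ₁ + τ₂)
      (fun t => if t ≤ τ₁ then y₁ t else y₂ (t - τ₁))
      (fun t => if t ≤ τ₁ then α₁ t else α₂ (t - τ₁)) := by
  have hτ₁ := h₁.1; have hτ₂ := h₂.1
  have hy10 := h₁.2.1; have hy20 := h₂.2.1
  have hmem1 := h₁.2.2.1; have hmem2 := h₂.2.2.1
  have hα1m := h₁.2.2.2.1.1; have hα1s := h₁.2.2.2.1.2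
  have hα2m := h₂.2.2.2.1.1; have hα2s := h₂.2.2.2.1.2
  have heq1 := h₁.2.2.2.2; have heq2 := h₂.2.2.2.2
  set z : ℝ → Pt d := fun t => if t ≤ τ₁ then y₁ t else y₂ (t - τ₁) with hz
  set β : ℝ → Pt d := fun t => if t ≤ τ₁ then α₁ t else α₂ (t - τ₁) with hβ
  have hzval1 : ∀ s, s ≤ τ₁ → z s = y₁ s := fun s hs => if_pos hs
  have hzval2 : ∀ s, ¬ s ≤ τ₁ → z s = y₂ (s - τ₁) := fun s hs => if_neg hs
  have hβval1 : ∀ s, s ≤ τ₁ → β s = α₁ s := fun s hs => if_pos hs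
  have hβval2 : ∀ s, ¬ s ≤ τ₁ → β s = α₂ (s - τ₁) := fun s hs => if_neg hs
  refine ⟨by linarith, (hzval1 0 hτ₁).trans hy10, ?_, ⟨?_, ?_⟩, ?_⟩
  · intro t htc
    by_cases hcase : t ≤ τ₁
    · rw [hzval1 t hcase]; exact hmem1 t ⟨htc.1, hcase⟩
    · rw [hzval2 t hcase]
      exact hmem2 _ ⟨by linarith [not_le.1 hcase], by linarith [htc.2]⟩
  · exact Measurable.ite measurableSet_Iic hα1m
      (hα2m.comp (measurable_id.sub measurable_const))
  · intro t
    by_cases hcase : t ≤ τ₁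
    · rw [hβval1 t hcase]; exact hα1s t
    · rw [hβval2 t hcase]; exact hα2s _
  · intro t htc
    by_cases hcase : t ≤ τ₁
    · rw [hzval1 t hcase]
      have e1 : (∫ s in (0:ℝ)..t, (σ * S.f (z s) (β s)) • β s)
          = ∫ s in (0:ℝ)..t, (σ * S.f (y₁ s) (α₁ s)) • α₁ s := by
        apply intervalIntegral.integral_congr
        intro s hs
        rw [uIcc_of_le htc.1] at hs
        simp only [hzval1 s (hs.2.trans hcase), hβval1 s (hs.2.trans hcase)]
      rw [e1]; exact heq1 t ⟨htc.1, hcase⟩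
    · push_neg at hcase
      rw [hzval2 t (not_le.2 hcase)]
      have hG1 : IntervalIntegrable (fun s => (σ * S.f (z s) (β s)) • β s)
          volume 0 τ₁ := by
        rw [intervalIntegrable_iff, uIoc_of_le hτ₁]
        refine (traj_integrableOn S hσ h₁).congr ?_
        refine (ae_restrict_iff' measurableSet_Ioc).2 (ae_of_all _ fun s hs => ?_)
        simp only [hzval1 s hs.2, hβval1 s hs.2]
      have hG2 : IntervalIntegrable (fun s => (σ * S.f (z s) (β s)) • β s)
          volume τ₁ t := by
        have base : IntervalIntegrable
            (fun s => (σ * S.f (y₂ s) (α₂ s)) • α₂ s) volume 0 (t - τ₁) := by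
          rw [intervalIntegrable_iff, uIoc_of_le (by linarith : (0:ℝ) ≤ t - τ₁)]
          exact (traj_integrableOn S hσ h₂).mono_set
            (Ioc_subset_Ioc_right (by linarith [htc.2]))
        have base2 := base.comp_sub_right τ₁
        rw [zero_add, sub_add_cancel] at base2
        rw [intervalIntegrable_iff, uIoc_of_le hcase.le]
        rw [intervalIntegrable_iff, uIoc_of_le hcase.le] at base2
        refine base2.congr ?_
        refine (ae_restrict_iff' measurableSet_Ioc).2 (ae_of_all _ fun s hs => ?_)
        simp only [hzval2 s (not_le.2 hs.1), hβval2 s (not_le.2 hs.1)]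
      have i1 : (∫ s in (0:ℝ)..τ₁, (σ * S.f (z s) (β s)) • β s)
          = ∫ s in (0:ℝ)..τ₁, (σ * S.f (y₁ s) (α₁ s)) • α₁ s := by
        apply intervalIntegral.integral_congr
        intro s hs
        rw [uIcc_of_le hτ₁] at hs
        simp only [hzval1 s hs.2, hβval1 s hs.2]
      have i2 : (∫ s in τ₁..t, (σ * S.f (z s) (β s)) • β s)
          = ∫ s in (0:ℝ)..(t - τ₁), (σ * S.f (y₂ s) (α₂ s)) • α₂ s := by
        have c1 : (∫ s in τ₁..t, (σ * S.f (z s) (β s)) • β s)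
            = ∫ s in τ₁..t,
                (fun u => (σ * S.f (y₂ u) (α₂ u)) • α₂ u) (s - τ₁) := by
          apply intervalIntegral.integral_congr_ae
          refine ae_of_all _ fun s hs => ?_
          rw [uIoc_of_le hcase.le] at hs
          simp only [hzval2 s (not_le.2 hs.1), hβval2 s (not_le.2 hs.1)]
        rw [c1, intervalIntegral.integral_comp_sub_right
          (fun u => (σ * S.f (y₂ u) (α₂ u)) • α₂ u) τ₁, sub_self]
      have hadd := intervalIntegral.integral_add_adjacent_intervals hG1 hG2
      rw [← hadd, i1, i2, heq2 (t - τ₁) ⟨by linarith, by linarith [htc.2]⟩,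
        heq1 τ₁ ⟨hτ₁, le_refl τ₁⟩]
      abel

/-! #### Minimum-time and value lemmas -/

lemma reach_nonneg {K : Set (Pt d)} {f : Pt d → Pt d → ℝ} {σ : ℝ} {tgt : Set (Pt d)}
    {x : Pt d} {τ : ℝ} (h : τ ∈ reachTimes K f σ tgt x) : 0 ≤ τ := by
  obtain ⟨y, ⟨α, hy⟩, _⟩ := h; exact hy.1

lemma minTime_le_ofReal {K : Set (Pt d)} {f : Pt d → Pt d → ℝ} {σ : ℝ} {tgt : Set (Pt d)}
    {x : Pt d} {τ : ℝ} (h : τ ∈ reachTimes K f σ tgt x) :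
    minTime K f σ tgt x ≤ ENNReal.ofReal τ := iInf₂_le τ h

lemma exists_reach_lt {K : Set (Pt d)} {f : Pt d → Pt d → ℝ} {σ : ℝ} {tgt : Set (Pt d)}
    {x : Pt d} (h : minTime K f σ tgt x ≠ ⊤) {ε : ℝ} (hε : 0 < ε) :
    ∃ τ ∈ reachTimes K f σ tgt x,
      ENNReal.ofReal τ < minTime K f σ tgt x + ENNReal.ofReal ε := by
  have hlt : minTime K f σ tgt x < minTime K f σ tgt x + ENNReal.ofReal ε :=
    ENNReal.lt_add_right h (ENNReal.ofReal_pos.2 hε).ne'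
  have h2 : (⨅ τ ∈ reachTimes K f σ tgt x, ENNReal.ofReal τ)
      < minTime K f σ tgt x + ENNReal.ofReal ε := hlt
  obtain ⟨τ, hτ⟩ := iInf_lt_iff.1 h2
  obtain ⟨hmem, hτ2⟩ := iInf_lt_iff.1 hτ
  exact ⟨τ, hmem, hτ2⟩

lemma vd_eq (S : Setting d) (x : Pt d) : S.vd x = kruzkov (S.Td x) := rfl

lemma vs_eq (S : Setting d) (x : Pt d) : S.vs x = kruzkov (S.Ts x) := rfl

lemma Fv_eq (S : Setting d) (q : Pt d) : S.Fv q = kruzkov (S.Ts q + S.Td q) := by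
  have hs : S.vs q = kruzkov (S.Ts q) := rfl
  have hd' : S.vd q = kruzkov (S.Td q) := rfl
  unfold Setting.Fv
  rw [hs, hd']
  by_cases hA : S.Ts q = ⊤
  · rw [hA, top_add, kruzkov_top]; ring
  by_cases hB : S.Td q = ⊤
  · rw [hB, add_top, kruzkov_top]; ring
  · unfold kruzkov
    rw [if_neg hA, if_neg hB, if_neg (ENNReal.add_ne_top.2 ⟨hA, hB⟩)]
    rw [ENNReal.toReal_add hA hB, neg_add, Real.exp_add]
    ring

/-! #### Global lower bound for `F_v` and symmetry of the optimal value -/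

lemma Fv_lower (S : Setting d) (hbdd : BddBelow (S.vd '' S.Ksrc))
    {q : Pt d} (hq : q ∈ closure S.Ω) :
    sInf (S.vd '' S.Ksrc) ≤ S.Fv q := by
  obtain ⟨z₀, hz₀⟩ := S.hKsrcNe
  have hstar_le_one : sInf (S.vd '' S.Ksrc) ≤ 1 :=
    (csInf_le hbdd ⟨z₀, hz₀, rfl⟩).trans (kruzkov_le_one _)
  rw [Fv_eq]
  by_cases hTs : S.Ts q = ⊤
  · rw [hTs, top_add, kruzkov_top]; exact hstar_le_one
  by_cases hTd : S.Td q = ⊤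
  · rw [hTd, add_top, kruzkov_top]; exact hstar_le_one
  refine le_of_forall_pos_le_add fun ε hε => ?_
  obtain ⟨τ₁, hτ₁R, hτ₁⟩ := exists_reach_lt (show minTime (closure S.Ω) S.f (-1) S.Ksrc q ≠ ⊤ from hTs) (half_pos hε)
  obtain ⟨τ₂, hτ₂R, hτ₂⟩ := exists_reach_lt (show minTime (closure S.Ω) S.f 1 S.Kdst q ≠ ⊤ from hTd) (half_pos hε)
  obtain ⟨y₁, ⟨α₁, h₁⟩, h₁end⟩ := hτ₁R
  obtain ⟨y₂, ⟨α₂, h₂⟩, h₂end⟩ := hτ₂R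
  have hτ₁0 : 0 ≤ τ₁ := h₁.1
  have hτ₂0 : 0 ≤ τ₂ := h₂.1
  have hq0 : y₂ 0 = q := h₂.2.1
  -- reverse the reverse trajectory: forward from y₁ τ₁ ∈ Ksrc, ending at q
  have hrev := traj_reverse S (Or.inr rfl) h₁
  have h11 : (-(-1 : ℝ)) = 1 := by norm_num
  rw [h11] at hrev
  -- concatenate
  have hstart : (fun s => y₁ (τ₁ - s)) τ₁ = q := by simp [h₁.2.1]
  rw [← hstart] at h₂
  have hcat := traj_concat S (Or.inl rfl) hrev h₂
  have hend : (fun t => if t ≤ τ₁ then y₁ (τ₁ - t) else y₂ (t - τ₁)) (τ₁ + τ₂)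
      ∈ S.Kdst := by
    by_cases hc : τ₁ + τ₂ ≤ τ₁
    · have hτ₂z : τ₂ = 0 := le_antisymm (by linarith) hτ₂0
      simp only [if_pos hc]
      have : y₁ (τ₁ - (τ₁ + τ₂)) = q := by
        rw [hτ₂z]; simpa using h₁.2.1
      rw [this, ← hq0, ← hτ₂z]; exact h₂end
    · simp only [if_neg hc, add_sub_cancel_left]; exact h₂end
  have hx₁ : y₁ τ₁ ∈ S.Ksrc := h₁end
  have hmemR : (τ₁ + τ₂) ∈ reachTimes (closure S.Ω) S.f 1 S.Kdst (y₁ τ₁) :=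
    ⟨_, ⟨_, hcat⟩, hend⟩
  have h5 : S.Td (y₁ τ₁) ≤ ENNReal.ofReal (τ₁ + τ₂) := minTime_le_ofReal hmemR
  have h6 : sInf (S.vd '' S.Ksrc) ≤ S.vd (y₁ τ₁) := csInf_le hbdd ⟨_, hx₁, rfl⟩
  calc sInf (S.vd '' S.Ksrc) ≤ kruzkov (S.Td (y₁ τ₁)) := h6
  _ ≤ kruzkov (ENNReal.ofReal τ₁ + ENNReal.ofReal τ₂) := by
      refine kruzkov_mono (h5.trans ?_)
      rw [ENNReal.ofReal_add hτ₁0 hτ₂0]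
  _ ≤ kruzkov ((S.Ts q + S.Td q) + ENNReal.ofReal (ε/2) + ENNReal.ofReal (ε/2)) := by
      refine kruzkov_mono ?_
      calc ENNReal.ofReal τ₁ + ENNReal.ofReal τ₂
          ≤ (S.Ts q + ENNReal.ofReal (ε/2)) + (S.Td q + ENNReal.ofReal (ε/2)) :=
            add_le_add hτ₁.le hτ₂.le
      _ = (S.Ts q + S.Td q) + ENNReal.ofReal (ε/2) + ENNReal.ofReal (ε/2) := by ring
  _ ≤ kruzkov ((S.Ts q + S.Td q) + ENNReal.ofReal (ε/2)) + ε/2 :=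
      kruzkov_add_ofReal_le _ (half_pos hε).le
  _ ≤ (kruzkov (S.Ts q + S.Td q) + ε/2) + ε/2 :=
      add_le_add_left (kruzkov_add_ofReal_le _ (half_pos hε).le) _
  _ = kruzkov (S.Ts q + S.Td q) + ε := by ring

lemma w_le_v (S : Setting d) (hbddD : BddBelow (S.vs '' S.Kdst)) :
    sInf (S.vs '' S.Kdst) ≤ sInf (S.vd '' S.Ksrc) := by
  refine le_csInf (S.hKsrcNe.image _) ?_
  rintro b ⟨z, hz, rfl⟩
  obtain ⟨w₀, hw₀⟩ := S.hKdstNe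
  by_cases hfin : S.Td z = ⊤
  · rw [vd_eq, hfin, kruzkov_top]
    exact (csInf_le hbddD ⟨w₀, hw₀, rfl⟩).trans (kruzkov_le_one _)
  refine le_of_forall_pos_le_add fun ε hε => ?_
  obtain ⟨τ, hτR, hτlt⟩ := exists_reach_lt
    (show minTime (closure S.Ω) S.f 1 S.Kdst z ≠ ⊤ from hfin) hε
  obtain ⟨y, ⟨α, hy⟩, hyend⟩ := hτR
  have hrev := traj_reverse S (Or.inl rfl) hy
  have hTs : S.Ts (y τ) ≤ ENNReal.ofReal τ := by
    refine minTime_le_ofReal ⟨_, ⟨_, hrev⟩, ?_⟩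
    show y (τ - τ) ∈ S.Ksrc
    rw [sub_self, hy.2.1]; exact hz
  calc sInf (S.vs '' S.Kdst) ≤ S.vs (y τ) := csInf_le hbddD ⟨_, hyend, rfl⟩
  _ = kruzkov (S.Ts (y τ)) := rfl
  _ ≤ kruzkov (S.Td z + ENNReal.ofReal ε) := kruzkov_mono (hTs.trans hτlt.le)
  _ ≤ kruzkov (S.Td z) + ε := kruzkov_add_ofReal_le _ hε.le
  _ = S.vd z + ε := by rw [← vd_eq]

lemma v_le_w (S : Setting d) (hbddK : BddBelow (S.vd '' S.Ksrc)) :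
    sInf (S.vd '' S.Ksrc) ≤ sInf (S.vs '' S.Kdst) := by
  refine le_csInf (S.hKdstNe.image _) ?_
  rintro b ⟨z, hz, rfl⟩
  obtain ⟨w₀, hw₀⟩ := S.hKsrcNe
  by_cases hfin : S.Ts z = ⊤
  · rw [vs_eq, hfin, kruzkov_top]
    exact (csInf_le hbddK ⟨w₀, hw₀, rfl⟩).trans (kruzkov_le_one _)
  refine le_of_forall_pos_le_add fun ε hε => ?_
  obtain ⟨τ, hτR, hτlt⟩ := exists_reach_lt
    (show minTime (closure S.Ω) S.f (-1) S.Ksrc z ≠ ⊤ from hfin) hε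
  obtain ⟨y, ⟨α, hy⟩, hyend⟩ := hτR
  have hrev := traj_reverse S (Or.inr rfl) hy
  have h11 : (-(-1 : ℝ)) = 1 := by norm_num
  rw [h11] at hrev
  have hTd : S.Td (y τ) ≤ ENNReal.ofReal τ := by
    refine minTime_le_ofReal ⟨_, ⟨_, hrev⟩, ?_⟩
    show y (τ - τ) ∈ S.Kdst
    rw [sub_self, hy.2.1]; exact hz
  calc sInf (S.vd '' S.Ksrc) ≤ S.vd (y τ) := csInf_le hbddK ⟨_, hyend, rfl⟩
  _ = kruzkov (S.Td (y τ)) := rfl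
  _ ≤ kruzkov (S.Ts z + ENNReal.ofReal ε) := kruzkov_mono (hTd.trans hτlt.le)
  _ ≤ kruzkov (S.Ts z) + ε := kruzkov_add_ofReal_le _ hε.le
  _ = S.vs z + ε := by rw [← vs_eq]

/-! #### Near-optimal trajectory constructions near the argmin sets -/

lemma key_src (S : Setting d)
    (hbdd : BddBelow (S.vd '' S.Ksrc))
    (hstar_lt : sInf (S.vd '' S.Ksrc) < 1)
    (hInfFv : sInf (S.vd '' S.Ksrc) ≤ sInf (S.Fv '' S.Ω))
    {x : Pt d} (hx : x ∈ S.Xsrc) {ε η : ℝ} (hε : 0 < ε) (hη : 0 < η) :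
    ∃ q ∈ S.Oset η, dist q x < ε := by
  have hMf := Mf_pos S
  have hxK : x ∈ S.Ksrc := hx.1
  have hxΩ : x ∈ S.Ω := S.hKsrcSub hxK
  have hvdx : S.vd x = sInf (S.vd '' S.Ksrc) := le_antisymm
    (le_csInf ⟨_, ⟨x, hxK, rfl⟩⟩ (by rintro b ⟨z, hz, rfl⟩; exact hx.2 z hz))
    (csInf_le hbdd ⟨x, hxK, rfl⟩)
  have hfin : S.Td x ≠ ⊤ := by
    intro hcon
    have h1 : S.vd x = 1 := by rw [vd_eq, hcon, kruzkov_top]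
    rw [hvdx] at h1; exact absurd h1 (ne_of_lt hstar_lt)
  obtain ⟨r₁, hr₁pos, hr₁⟩ := Metric.isOpen_iff.1 S.hΩopen x hxΩ
  have hxnd : x ∉ S.Kdst := fun hmem => (Set.disjoint_left.1 S.hKdisj hxK) hmem
  obtain ⟨r₂, hr₂pos, hr₂⟩ :=
    Metric.isOpen_iff.1 S.hKdstComp.isClosed.isOpen_compl x hxnd
  set m := min ε (min r₁ r₂) with hm
  have hmpos : 0 < m := lt_min hε (lt_min hr₁pos hr₂pos)
  set t := min η (m / (2 * S.Mf + 1)) with htdef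
  have htpos : 0 < t := lt_min hη (by positivity)
  have htm : S.Mf * t < m := by
    have h1 : t ≤ m / (2 * S.Mf + 1) := min_le_right _ _
    have h4 : t * (2 * S.Mf + 1) ≤ m := by
      rw [← le_div_iff₀ (by positivity)]; exact h1
    nlinarith
  obtain ⟨τ, hτR, hτlt⟩ := exists_reach_lt
    (show minTime (closure S.Ω) S.f 1 S.Kdst x ≠ ⊤ from hfin) (half_pos htpos)
  obtain ⟨y, ⟨α, hy⟩, hyend⟩ := hτR
  have hτ0 : 0 ≤ τ := hy.1
  have hτreal : τ < (S.Td x).toReal + t / 2 := by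
    have h1 : S.Td x + ENNReal.ofReal (t / 2)
        = ENNReal.ofReal ((S.Td x).toReal + t / 2) := by
      rw [ENNReal.ofReal_add ENNReal.toReal_nonneg (by linarith),
        ENNReal.ofReal_toReal hfin]
    have hτlt2 : ENNReal.ofReal τ < S.Td x + ENNReal.ofReal (t / 2) := hτlt
    rw [h1] at hτlt2
    exact (ENNReal.ofReal_lt_ofReal_iff_of_nonneg hτ0).1 hτlt2
  have hdist_end : r₂ ≤ S.Mf * τ := by
    have h1 : r₂ ≤ dist (y τ) x := by
      by_contra hcon
      exact (hr₂ (by rw [mem_ball]; linarith)) hyend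
    have h2 := traj_dist_start S (Or.inl rfl) hy ⟨hτ0, le_refl τ⟩
    rw [dist_eq_norm] at h1; linarith
  have htτ : t < τ := by
    have h2 : m ≤ r₂ := (min_le_right _ _).trans (min_le_right _ _)
    have h4 : t * (2 * S.Mf + 1) ≤ m := by
      rw [← le_div_iff₀ (by positivity)]; exact min_le_right _ _
    nlinarith
  have htIcc : t ∈ Icc 0 τ := ⟨htpos.le, htτ.le⟩
  set q := y t with hqdef
  have hqdist : ∀ c, S.Mf * t < c → dist q x < c := fun c hc => by
    rw [dist_eq_norm]; linarith [traj_dist_start S (Or.inl rfl) hy htIcc]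
  have hqε : dist q x < ε := hqdist ε (htm.trans_le (min_le_left _ _))
  have hqΩ : q ∈ S.Ω := hr₁ (by
    rw [mem_ball]
    exact hqdist r₁ (htm.trans_le ((min_le_right _ _).trans (min_le_left _ _))))
  have hqnd : q ∉ S.Kdst := hr₂ (by
    rw [mem_ball]
    exact hqdist r₂ (htm.trans_le ((min_le_right _ _).trans (min_le_right _ _))))
  have hpre : IsTrajCtrl (closure S.Ω) S.f 1 x t y α :=
    ⟨htpos.le, hy.2.1, fun s hs => hy.2.2.1 s ⟨hs.1, hs.2.trans htτ.le⟩,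
      hy.2.2.2.1, fun s hs => hy.2.2.2.2 s ⟨hs.1, hs.2.trans htτ.le⟩⟩
  have hrev := traj_reverse S (Or.inl rfl) hpre
  have hTs : S.Ts q ≤ ENNReal.ofReal t := by
    refine minTime_le_ofReal ⟨_, ⟨_, hrev⟩, ?_⟩
    show y (t - t) ∈ S.Ksrc
    rw [sub_self, hy.2.1]; exact hxK
  have htail := traj_tail S (Or.inl rfl) hy htIcc
  have hTd : S.Td q ≤ ENNReal.ofReal (τ - t) := by
    refine minTime_le_ofReal ⟨_, ⟨_, htail⟩, ?_⟩
    show y (t + (τ - t)) ∈ S.Kdst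
    rw [show t + (τ - t) = τ by ring]; exact hyend
  have hqns : q ∉ S.Ksrc := by
    intro hqK
    have h1 : sInf (S.vd '' S.Ksrc) ≤ S.vd q := csInf_le hbdd ⟨q, hqK, rfl⟩
    have h2 : S.vd q ≤ 1 - Real.exp (-(τ - t)) := by
      rw [vd_eq]
      calc kruzkov (S.Td q) ≤ kruzkov (ENNReal.ofReal (τ - t)) := kruzkov_mono hTd
      _ = 1 - Real.exp (-(τ - t)) := kruzkov_ofReal (by linarith)
    have h3 : sInf (S.vd '' S.Ksrc) = 1 - Real.exp (-(S.Td x).toReal) := by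
      rw [← hvdx, vd_eq]; unfold kruzkov; rw [if_neg hfin]
    have h4 : Real.exp (-(τ - t)) ≤ Real.exp (-(S.Td x).toReal) := by linarith
    have h5 : (S.Td x).toReal ≤ τ - t := by
      have := Real.exp_le_exp.1 h4; linarith
    linarith
  have hFvq : S.Fv q < sInf (S.Fv '' S.Ω) + η := by
    have h2 : S.Ts q + S.Td q ≤ ENNReal.ofReal τ := by
      calc S.Ts q + S.Td q ≤ ENNReal.ofReal t + ENNReal.ofReal (τ - t) :=
        add_le_add hTs hTd
      _ = ENNReal.ofReal τ := by
          rw [← ENNReal.ofReal_add htpos.le (by linarith)]; ring_nf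
    have h3 : kruzkov (ENNReal.ofReal τ) ≤ sInf (S.vd '' S.Ksrc) + t / 2 := by
      calc kruzkov (ENNReal.ofReal τ)
          ≤ kruzkov (S.Td x + ENNReal.ofReal (t / 2)) := kruzkov_mono hτlt.le
      _ ≤ kruzkov (S.Td x) + t / 2 := kruzkov_add_ofReal_le _ (by linarith)
      _ = sInf (S.vd '' S.Ksrc) + t / 2 := by rw [← vd_eq, hvdx]
    have h4 : t / 2 < η := by
      have := min_le_left η (m / (2 * S.Mf + 1))
      linarith
    have h5 := kruzkov_mono h2
    rw [Fv_eq]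
    linarith
  exact ⟨q, ⟨⟨hqΩ, fun hmem => hmem.elim hqns hqnd⟩, hFvq⟩, hqε⟩

lemma key_dst (S : Setting d)
    (hbdd : BddBelow (S.vs '' S.Kdst))
    (hstar_lt : sInf (S.vs '' S.Kdst) < 1)
    (hInfFv : sInf (S.vs '' S.Kdst) ≤ sInf (S.Fv '' S.Ω))
    {x : Pt d} (hx : x ∈ S.Xdst) {ε η : ℝ} (hε : 0 < ε) (hη : 0 < η) :
    ∃ q ∈ S.Oset η, dist q x < ε := by
  have hMf := Mf_pos S
  have hxK : x ∈ S.Kdst := hx.1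
  have hxΩ : x ∈ S.Ω := S.hKdstSub hxK
  have hvsx : S.vs x = sInf (S.vs '' S.Kdst) := le_antisymm
    (le_csInf ⟨_, ⟨x, hxK, rfl⟩⟩ (by rintro b ⟨z, hz, rfl⟩; exact hx.2 z hz))
    (csInf_le hbdd ⟨x, hxK, rfl⟩)
  have hfin : S.Ts x ≠ ⊤ := by
    intro hcon
    have h1 : S.vs x = 1 := by rw [vs_eq, hcon, kruzkov_top]
    rw [hvsx] at h1; exact absurd h1 (ne_of_lt hstar_lt)
  obtain ⟨r₁, hr₁pos, hr₁⟩ := Metric.isOpen_iff.1 S.hΩopen x hxΩ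
  have hxns : x ∉ S.Ksrc := fun hmem => (Set.disjoint_left.1 S.hKdisj hmem) hxK
  obtain ⟨r₂, hr₂pos, hr₂⟩ :=
    Metric.isOpen_iff.1 S.hKsrcComp.isClosed.isOpen_compl x hxns
  set m := min ε (min r₁ r₂) with hm
  have hmpos : 0 < m := lt_min hε (lt_min hr₁pos hr₂pos)
  set t := min η (m / (2 * S.Mf + 1)) with htdef
  have htpos : 0 < t := lt_min hη (by positivity)
  have htm : S.Mf * t < m := by
    have h4 : t * (2 * S.Mf + 1) ≤ m := by
      rw [← le_div_iff₀ (by positivity)]; exact min_le_right _ _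
    nlinarith
  obtain ⟨τ, hτR, hτlt⟩ := exists_reach_lt
    (show minTime (closure S.Ω) S.f (-1) S.Ksrc x ≠ ⊤ from hfin) (half_pos htpos)
  obtain ⟨y, ⟨α, hy⟩, hyend⟩ := hτR
  have hτ0 : 0 ≤ τ := hy.1
  have hτreal : τ < (S.Ts x).toReal + t / 2 := by
    have h1 : S.Ts x + ENNReal.ofReal (t / 2)
        = ENNReal.ofReal ((S.Ts x).toReal + t / 2) := by
      rw [ENNReal.ofReal_add ENNReal.toReal_nonneg (by linarith),
        ENNReal.ofReal_toReal hfin]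
    have hτlt2 : ENNReal.ofReal τ < S.Ts x + ENNReal.ofReal (t / 2) := hτlt
    rw [h1] at hτlt2
    exact (ENNReal.ofReal_lt_ofReal_iff_of_nonneg hτ0).1 hτlt2
  have hdist_end : r₂ ≤ S.Mf * τ := by
    have h1 : r₂ ≤ dist (y τ) x := by
      by_contra hcon
      exact (hr₂ (by rw [mem_ball]; linarith)) hyend
    have h2 := traj_dist_start S (Or.inr rfl) hy ⟨hτ0, le_refl τ⟩
    rw [dist_eq_norm] at h1; linarith
  have htτ : t < τ := by
    have h2 : m ≤ r₂ := (min_le_right _ _).trans (min_le_right _ _)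
    have h4 : t * (2 * S.Mf + 1) ≤ m := by
      rw [← le_div_iff₀ (by positivity)]; exact min_le_right _ _
    nlinarith
  have htIcc : t ∈ Icc 0 τ := ⟨htpos.le, htτ.le⟩
  set q := y t with hqdef
  have hqdist : ∀ c, S.Mf * t < c → dist q x < c := fun c hc => by
    rw [dist_eq_norm]; linarith [traj_dist_start S (Or.inr rfl) hy htIcc]
  have hqε : dist q x < ε := hqdist ε (htm.trans_le (min_le_left _ _))
  have hqΩ : q ∈ S.Ω := hr₁ (by
    rw [mem_ball]
    exact hqdist r₁ (htm.trans_le ((min_le_right _ _).trans (min_le_left _ _))))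
  have hqns : q ∉ S.Ksrc := hr₂ (by
    rw [mem_ball]
    exact hqdist r₂ (htm.trans_le ((min_le_right _ _).trans (min_le_right _ _))))
  have hpre : IsTrajCtrl (closure S.Ω) S.f (-1) x t y α :=
    ⟨htpos.le, hy.2.1, fun s hs => hy.2.2.1 s ⟨hs.1, hs.2.trans htτ.le⟩,
      hy.2.2.2.1, fun s hs => hy.2.2.2.2 s ⟨hs.1, hs.2.trans htτ.le⟩⟩
  have hrev := traj_reverse S (Or.inr rfl) hpre
  have h11 : (-(-1 : ℝ)) = 1 := by norm_num
  rw [h11] at hrev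
  have hTd : S.Td q ≤ ENNReal.ofReal t := by
    refine minTime_le_ofReal ⟨_, ⟨_, hrev⟩, ?_⟩
    show y (t - t) ∈ S.Kdst
    rw [sub_self, hy.2.1]; exact hxK
  have htail := traj_tail S (Or.inr rfl) hy htIcc
  have hTs : S.Ts q ≤ ENNReal.ofReal (τ - t) := by
    refine minTime_le_ofReal ⟨_, ⟨_, htail⟩, ?_⟩
    show y (t + (τ - t)) ∈ S.Ksrc
    rw [show t + (τ - t) = τ by ring]; exact hyend
  have hqnd : q ∉ S.Kdst := by
    intro hqK
    have h1 : sInf (S.vs '' S.Kdst) ≤ S.vs q := csInf_le hbdd ⟨q, hqK, rfl⟩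
    have h2 : S.vs q ≤ 1 - Real.exp (-(τ - t)) := by
      rw [vs_eq]
      calc kruzkov (S.Ts q) ≤ kruzkov (ENNReal.ofReal (τ - t)) := kruzkov_mono hTs
      _ = 1 - Real.exp (-(τ - t)) := kruzkov_ofReal (by linarith)
    have h3 : sInf (S.vs '' S.Kdst) = 1 - Real.exp (-(S.Ts x).toReal) := by
      rw [← hvsx, vs_eq]; unfold kruzkov; rw [if_neg hfin]
    have h4 : Real.exp (-(τ - t)) ≤ Real.exp (-(S.Ts x).toReal) := by linarith
    have h5 : (S.Ts x).toReal ≤ τ - t := by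
      have := Real.exp_le_exp.1 h4; linarith
    linarith
  have hFvq : S.Fv q < sInf (S.Fv '' S.Ω) + η := by
    have h2 : S.Ts q + S.Td q ≤ ENNReal.ofReal τ := by
      calc S.Ts q + S.Td q ≤ ENNReal.ofReal (τ - t) + ENNReal.ofReal t :=
        add_le_add hTs hTd
      _ = ENNReal.ofReal τ := by
          rw [← ENNReal.ofReal_add (by linarith) htpos.le]; ring_nf
    have h3 : kruzkov (ENNReal.ofReal τ) ≤ sInf (S.vs '' S.Kdst) + t / 2 := by
      calc kruzkov (ENNReal.ofReal τ)
          ≤ kruzkov (S.Ts x + ENNReal.ofReal (t / 2)) := kruzkov_mono hτlt.le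
      _ ≤ kruzkov (S.Ts x) + t / 2 := kruzkov_add_ofReal_le _ (by linarith)
      _ = sInf (S.vs '' S.Kdst) + t / 2 := by rw [← vs_eq, hvsx]
    have h4 : t / 2 < η := by
      have := min_le_left η (m / (2 * S.Mf + 1))
      linarith
    have h5 := kruzkov_mono h2
    rw [Fv_eq]
    linarith
  exact ⟨q, ⟨⟨hqΩ, fun hmem => hmem.elim hqns hqnd⟩, hFvq⟩, hqε⟩

end MinTimeAux

end Aux

open MinTimeAux in
/-- If `Γ*` is nonempty then for every `η > 0`, `X_src ⊆ ∂O_η ∩ ∂K_src`,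
`X_dst ⊆ ∂O_η ∩ ∂K_dst`, and `Γ* ⊆ cl(O_η)`. -/
theorem argmin_subset_frontier_Oset {d : ℕ} (S : Setting d)
    (hvd : ContinuousOn S.vd (closure S.Ω)) (hvs : ContinuousOn S.vs (closure S.Ω))
    (hne : S.GammaFwd.Nonempty) :
    ∀ η : ℝ, 0 < η →
      S.Xsrc ⊆ frontier (S.Oset η) ∩ frontier S.Ksrc ∧
      S.Xdst ⊆ frontier (S.Oset η) ∩ frontier S.Kdst ∧
      S.GammaFwd ⊆ closure (S.Oset η) := by
  classical
  intro η hη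
  have hbddK : BddBelow (S.vd '' S.Ksrc) :=
    ⟨0, by rintro b ⟨z, _, rfl⟩; exact kruzkov_nonneg _⟩
  have hbddD : BddBelow (S.vs '' S.Kdst) :=
    ⟨0, by rintro b ⟨z, _, rfl⟩; exact kruzkov_nonneg _⟩
  obtain ⟨p₀, hp₀⟩ := hne
  simp only [Setting.GammaFwd, mem_iUnion] at hp₀
  obtain ⟨x₀, hx₀, hp₀g⟩ := hp₀
  obtain ⟨τ₀, y₀, hy₀traj, hy₀end, hy₀opt, _, _, _⟩ := hp₀g
  have hfin₀ : S.Td x₀ ≠ ⊤ := by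
    rw [show S.Td x₀ = minTime (closure S.Ω) S.f 1 S.Kdst x₀ from rfl, ← hy₀opt]
    exact ENNReal.ofReal_ne_top
  have hstar_lt : sInf (S.vd '' S.Ksrc) < 1 :=
    lt_of_le_of_lt (csInf_le hbddK ⟨x₀, hx₀.1, rfl⟩)
      (by rw [vd_eq]; exact kruzkov_lt_one hfin₀)
  have hweq : sInf (S.vs '' S.Kdst) = sInf (S.vd '' S.Ksrc) :=
    le_antisymm (w_le_v S hbddD) (v_le_w S hbddK)
  have hInfFv : sInf (S.vd '' S.Ksrc) ≤ sInf (S.Fv '' S.Ω) :=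
    le_csInf (S.hΩne.image _)
      (by rintro b ⟨z, hz, rfl⟩; exact Fv_lower S hbddK (subset_closure hz))
  have hwstar_lt : sInf (S.vs '' S.Kdst) < 1 := by rw [hweq]; exact hstar_lt
  have hwInfFv : sInf (S.vs '' S.Kdst) ≤ sInf (S.Fv '' S.Ω) := by
    rw [hweq]; exact hInfFv
  have hsrc_front : ∀ x ∈ S.Xsrc, x ∈ frontier (S.Oset η) ∩ frontier S.Ksrc := by
    intro x hx
    have hkey : ∀ ε : ℝ, 0 < ε → ∃ q ∈ S.Oset η, dist q x < ε :=
      fun ε hε => key_src S hbddK hstar_lt hInfFv hx hε hη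
    constructor
    · show x ∈ closure (S.Oset η) \ interior (S.Oset η)
      constructor
      · rw [Metric.mem_closure_iff]
        intro ε hε
        obtain ⟨q, hqO, hqd⟩ := hkey ε hε
        exact ⟨q, hqO, by rw [dist_comm]; exact hqd⟩
      · intro hint
        exact (interior_subset hint).1.2 (Or.inl hx.1)
    · show x ∈ closure S.Ksrc \ interior S.Ksrc
      constructor
      · exact subset_closure hx.1
      · intro hint
        obtain ⟨ρ, hρpos, hρ⟩ :=
          Metric.mem_nhds_iff.1 (mem_interior_iff_mem_nhds.1 hint)
        obtain ⟨q, hqO, hqd⟩ := hkey ρ hρpos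
        exact hqO.1.2 (Or.inl (hρ (mem_ball.2 hqd)))
  have hdst_front : ∀ x ∈ S.Xdst, x ∈ frontier (S.Oset η) ∩ frontier S.Kdst := by
    intro x hx
    have hkey : ∀ ε : ℝ, 0 < ε → ∃ q ∈ S.Oset η, dist q x < ε :=
      fun ε hε => key_dst S hbddD hwstar_lt hwInfFv hx hε hη
    constructor
    · show x ∈ closure (S.Oset η) \ interior (S.Oset η)
      constructor
      · rw [Metric.mem_closure_iff]
        intro ε hε
        obtain ⟨q, hqO, hqd⟩ := hkey ε hε
        exact ⟨q, hqO, by rw [dist_comm]; exact hqd⟩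
      · intro hint
        exact (interior_subset hint).1.2 (Or.inr hx.1)
    · show x ∈ closure S.Kdst \ interior S.Kdst
      constructor
      · exact subset_closure hx.1
      · intro hint
        obtain ⟨ρ, hρpos, hρ⟩ :=
          Metric.mem_nhds_iff.1 (mem_interior_iff_mem_nhds.1 hint)
        obtain ⟨q, hqO, hqd⟩ := hkey ρ hρpos
        exact hqO.1.2 (Or.inr (hρ (mem_ball.2 hqd)))
  refine ⟨fun x hx => hsrc_front x hx, fun x hx => hdst_front x hx, ?_⟩
  intro p hp
  simp only [Setting.GammaFwd, mem_iUnion] at hp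
  obtain ⟨x, hxsrc, hpg⟩ := hp
  obtain ⟨τ, y, ⟨α, hy⟩, hyend, hyopt, t, ht, hpt⟩ := hpg
  have hτ0 : 0 ≤ τ := hy.1
  have hTdx : S.Td x = ENNReal.ofReal τ := by
    rw [show S.Td x = minTime (closure S.Ω) S.f 1 S.Kdst x from rfl, ← hyopt]
  have hvdx : S.vd x = sInf (S.vd '' S.Ksrc) := le_antisymm
    (le_csInf ⟨_, ⟨x, hxsrc.1, rfl⟩⟩ (by rintro b ⟨z, hz, rfl⟩; exact hxsrc.2 z hz))
    (csInf_le hbddK ⟨x, hxsrc.1, rfl⟩)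
  have hvstar_exp : sInf (S.vd '' S.Ksrc) = 1 - Real.exp (-τ) := by
    rw [← hvdx, vd_eq, hTdx, kruzkov_ofReal hτ0]
  have hpre : IsTrajCtrl (closure S.Ω) S.f 1 x t y α :=
    ⟨ht.1, hy.2.1, fun s hs => hy.2.2.1 s ⟨hs.1, hs.2.trans ht.2⟩, hy.2.2.2.1,
      fun s hs => hy.2.2.2.2 s ⟨hs.1, hs.2.trans ht.2⟩⟩
  have hrev := traj_reverse S (Or.inl rfl) hpre
  have hTs_p : S.Ts p ≤ ENNReal.ofReal t := by
    rw [hpt]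
    refine minTime_le_ofReal ⟨_, ⟨_, hrev⟩, ?_⟩
    show y (t - t) ∈ S.Ksrc
    rw [sub_self, hy.2.1]; exact hxsrc.1
  have htail := traj_tail S (Or.inl rfl) hy ht
  have hTd_p : S.Td p ≤ ENNReal.ofReal (τ - t) := by
    rw [hpt]
    refine minTime_le_ofReal ⟨_, ⟨_, htail⟩, ?_⟩
    show y (t + (τ - t)) ∈ S.Kdst
    rw [show t + (τ - t) = τ by ring]; exact hyend
  by_cases hpK : p ∈ S.Ksrc
  · have hpX : p ∈ S.Xsrc := by
      refine ⟨hpK, fun z hz => ?_⟩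
      have h1 : S.vd p ≤ 1 - Real.exp (-(τ - t)) := by
        rw [vd_eq]
        calc kruzkov (S.Td p) ≤ kruzkov (ENNReal.ofReal (τ - t)) :=
          kruzkov_mono hTd_p
        _ = 1 - Real.exp (-(τ - t)) := kruzkov_ofReal (by linarith [ht.2])
      have h2 : Real.exp (-τ) ≤ Real.exp (-(τ - t)) :=
        Real.exp_le_exp.2 (by linarith [ht.1])
      have h3 : sInf (S.vd '' S.Ksrc) ≤ S.vd z := csInf_le hbddK ⟨z, hz, rfl⟩
      linarith [hvstar_exp]
    rw [Metric.mem_closure_iff]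
    intro ε hε
    obtain ⟨q, hqO, hqd⟩ := key_src S hbddK hstar_lt hInfFv hpX hε hη
    exact ⟨q, hqO, by rw [dist_comm]; exact hqd⟩
  by_cases hpD : p ∈ S.Kdst
  · have hpX : p ∈ S.Xdst := by
      refine ⟨hpD, fun z hz => ?_⟩
      have h1 : S.vs p ≤ 1 - Real.exp (-t) := by
        rw [vs_eq]
        calc kruzkov (S.Ts p) ≤ kruzkov (ENNReal.ofReal t) := kruzkov_mono hTs_p
        _ = 1 - Real.exp (-t) := kruzkov_ofReal ht.1
      have h2 : Real.exp (-τ) ≤ Real.exp (-t) :=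
        Real.exp_le_exp.2 (by linarith [ht.2])
      have h3 : sInf (S.vs '' S.Kdst) ≤ S.vs z := csInf_le hbddD ⟨z, hz, rfl⟩
      have h4 : sInf (S.vs '' S.Kdst) = 1 - Real.exp (-τ) := by
        rw [hweq]; exact hvstar_exp
      linarith
    rw [Metric.mem_closure_iff]
    intro ε hε
    obtain ⟨q, hqO, hqd⟩ := key_dst S hbddD hwstar_lt hwInfFv hpX hε hη
    exact ⟨q, hqO, by rw [dist_comm]; exact hqd⟩
  · have hpcl : p ∈ closure S.Ω := by rw [hpt]; exact hy.2.2.1 t ht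
    have hFvp : S.Fv p ≤ sInf (S.vd '' S.Ksrc) := by
      rw [Fv_eq]
      have h2 : S.Ts p + S.Td p ≤ ENNReal.ofReal τ := by
        calc S.Ts p + S.Td p ≤ ENNReal.ofReal t + ENNReal.ofReal (τ - t) :=
          add_le_add hTs_p hTd_p
        _ = ENNReal.ofReal τ := by
            rw [← ENNReal.ofReal_add ht.1 (by linarith [ht.2])]; ring_nf
      calc kruzkov (S.Ts p + S.Td p) ≤ kruzkov (ENNReal.ofReal τ) :=
        kruzkov_mono h2
      _ = 1 - Real.exp (-τ) := kruzkov_ofReal hτ0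
      _ = sInf (S.vd '' S.Ksrc) := hvstar_exp.symm
    have hFvcont : ContinuousOn S.Fv (closure S.Ω) := by
      have hFvdef : S.Fv = fun q => S.vs q + S.vd q - S.vs q * S.vd q := rfl
      rw [hFvdef]
      exact (hvs.add hvd).sub (hvs.mul hvd)
    have hlt : S.Fv p < sInf (S.Fv '' S.Ω) + η := by linarith [hInfFv]
    have hev : S.Fv ⁻¹' (Iio (sInf (S.Fv '' S.Ω) + η)) ∈ nhdsWithin p (closure S.Ω) :=
      hFvcont p hpcl (Iio_mem_nhds hlt)
    rw [Metric.mem_nhdsWithin_iff] at hev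
    obtain ⟨δ, hδpos, hδ⟩ := hev
    obtain ⟨r₁, hr₁pos, hr₁⟩ :=
      Metric.isOpen_iff.1 S.hKsrcComp.isClosed.isOpen_compl p hpK
    obtain ⟨r₂, hr₂pos, hr₂⟩ :=
      Metric.isOpen_iff.1 S.hKdstComp.isClosed.isOpen_compl p hpD
    rw [Metric.mem_closure_iff]
    intro ε hε
    have hρpos : 0 < min (min ε δ) (min r₁ r₂) :=
      lt_min (lt_min hε hδpos) (lt_min hr₁pos hr₂pos)
    obtain ⟨z, hzΩ, hzd⟩ := Metric.mem_closure_iff.1 hpcl _ hρpos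
    have hzδ : dist z p < δ := by
      rw [dist_comm]
      exact hzd.trans_le ((min_le_left _ _).trans (min_le_right _ _))
    have hzr₁ : z ∈ S.Ksrcᶜ := hr₁ (mem_ball.2 (by
      rw [dist_comm]
      exact hzd.trans_le ((min_le_right _ _).trans (min_le_left _ _))))
    have hzr₂ : z ∈ S.Kdstᶜ := hr₂ (mem_ball.2 (by
      rw [dist_comm]
      exact hzd.trans_le ((min_le_right _ _).trans (min_le_right _ _))))
    have hFvz : S.Fv z < sInf (S.Fv '' S.Ω) + η :=
      hδ ⟨mem_ball.2 hzδ, subset_closure hzΩ⟩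
    exact ⟨z, ⟨⟨hzΩ, fun hmem => hmem.elim (fun h => hzr₁ h) (fun h => hzr₂ h)⟩, hFvz⟩,
      hzd.trans_le ((min_le_left _ _).trans (min_le_left _ _))⟩
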